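/- Let W be a fractional edge cover of (the hypergraph with vertex set {1,…,d} and edge set) E with lump-sum ρ* = ∑_{e∈E} W(e), and suppose |R_e| ≤ N for every e ∈ E, where N ≥ 1. For each i ∈ {1,…,d}, let 𝓘_i be a finite family of pairwise disjoint subsets of ℤ. Then for every real Δ > 0, the number of combinations (I_1,…,I_d) ∈ 𝓘_1 × ⋯ × 𝓘_d satisfying ∏_{e ∈ E} |R_e ⋉ B(I_1,…,I_d)|^{W(e)} > Δ is at most N^{ρ*}/Δ. -/

import Mathlib

open Classical

/-- Real power with the convention that `0 ^ y = 0` for every exponent `y`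
(in particular `0 ^ 0 = 0`); for nonzero base it is the usual real power. -/
noncomputable def pow0 (a y : ℝ) : ℝ := if a = 0 then 0 else Real.rpow a y

open Finset Function

section Aux

variable {ι : Type*} {κ : Type*} [Fintype κ]

/-- `∑ x, u x ^ c ≤ (∑ x, u x) ^ c` for `c ≥ 1` in `ℝ≥0`. -/
lemma aux_sum_rpow_le (u : κ → NNReal) {c : ℝ} (hc : 1 ≤ c) :
    ∑ x : κ, u x ^ c ≤ (∑ x : κ, u x) ^ c := by
  set S := ∑ x : κ, u x with hS
  have hterm : ∀ x : κ, u x ^ c ≤ u x * S ^ (c - 1) := by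
    intro x
    by_cases hx : u x = 0
    · simp [hx, NNReal.zero_rpow (by linarith : c ≠ 0)]
    · have h1 : u x ^ c = u x * u x ^ (c - 1) := by
        rw [show c = 1 + (c - 1) by ring, NNReal.rpow_add hx, NNReal.rpow_one]
        ring_nf
      rw [h1]
      have hle : u x ≤ S := Finset.single_le_sum (fun y _ => zero_le) (mem_univ x)
      exact mul_le_mul_right (NNReal.rpow_le_rpow hle (by linarith)) _
  calc ∑ x : κ, u x ^ c ≤ ∑ x : κ, u x * S ^ (c - 1) := Finset.sum_le_sum fun x _ => hterm x
    _ = S * S ^ (c - 1) := by rw [← Finset.sum_mul]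
    _ ≤ S ^ c := by
        by_cases hSz : S = 0
        · simp [hSz]
        · have : S ^ c = S * S ^ (c - 1) := by
            rw [show c = 1 + (c - 1) by ring, NNReal.rpow_add hSz, NNReal.rpow_one]
            ring_nf
          rw [this]

/-- Hölder inequality, normalized weights version, in `ℝ≥0`. -/
lemma aux_holder_one (s : Finset ι) (w : ι → NNReal) (h : ι → κ → NNReal)
    (hw : ∑ j ∈ s, w j = 1) :
    ∑ x : κ, ∏ j ∈ s, h j x ^ (w j : ℝ) ≤ ∏ j ∈ s, (∑ x : κ, h j x) ^ (w j : ℝ) := by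
  set S : ι → NNReal := fun j => ∑ x : κ, h j x with hSdef
  by_cases hz : ∃ j ∈ s, w j ≠ 0 ∧ S j = 0
  · obtain ⟨j, hj, hwj, hSj⟩ := hz
    have hhj : ∀ x : κ, h j x = 0 := fun x =>
      (Finset.sum_eq_zero_iff.1 hSj) x (mem_univ x)
    have : ∀ x : κ, ∏ j' ∈ s, h j' x ^ (w j' : ℝ) = 0 := fun x =>
      Finset.prod_eq_zero hj (by
        rw [hhj x, NNReal.zero_rpow (by exact_mod_cast hwj)])
    simp [this]
  · push_neg at hz
    have key : ∀ x : κ, ∏ j ∈ s, h j x ^ (w j : ℝ)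
        = (∏ j ∈ s, S j ^ (w j : ℝ)) * ∏ j ∈ s, (h j x / S j) ^ (w j : ℝ) := by
      intro x
      rw [← Finset.prod_mul_distrib]
      refine Finset.prod_congr rfl fun j hj => ?_
      by_cases hwj : w j = 0
      · simp [hwj]
      · have hSj : S j ≠ 0 := hz j hj hwj
        rw [← NNReal.mul_rpow, mul_div_cancel₀ _ hSj]
    have amgm : ∀ x : κ, ∏ j ∈ s, (h j x / S j) ^ (w j : ℝ)
        ≤ ∑ j ∈ s, w j * (h j x / S j) := fun x =>
      NNReal.geom_mean_le_arith_mean_weighted s w _ hw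
    calc ∑ x : κ, ∏ j ∈ s, h j x ^ (w j : ℝ)
        ≤ ∑ x : κ, (∏ j ∈ s, S j ^ (w j : ℝ)) * ∑ j ∈ s, w j * (h j x / S j) := by
          refine Finset.sum_le_sum fun x _ => ?_
          rw [key x]
          exact mul_le_mul_right (amgm x) _
      _ = (∏ j ∈ s, S j ^ (w j : ℝ)) * ∑ j ∈ s, w j * (S j / S j) := by
          rw [← Finset.mul_sum]
          congr 1
          rw [Finset.sum_comm]
          refine Finset.sum_congr rfl fun j _ => ?_
          rw [← Finset.mul_sum, Finset.sum_div]
      _ ≤ ∏ j ∈ s, S j ^ (w j : ℝ) := by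
          have : ∑ j ∈ s, w j * (S j / S j) ≤ 1 := by
            rw [← hw]
            refine Finset.sum_le_sum fun j hj => ?_
            by_cases hSj : S j = 0
            · simp [hSj]
            · rw [div_self hSj, mul_one]
          calc _ ≤ (∏ j ∈ s, S j ^ (w j : ℝ)) * 1 := mul_le_mul_right this _
            _ = _ := mul_one _

/-- Hölder inequality with total weight at least one, in `ℝ≥0`. -/
lemma aux_holder (s : Finset ι) (w : ι → NNReal) (h : ι → κ → NNReal)
    (hw : 1 ≤ ∑ j ∈ s, w j) :
    ∑ x : κ, ∏ j ∈ s, h j x ^ (w j : ℝ) ≤ ∏ j ∈ s, (∑ x : κ, h j x) ^ (w j : ℝ) := by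
  set c : NNReal := ∑ j ∈ s, w j with hc
  have hc0 : c ≠ 0 := by
    intro h0; rw [h0] at hw; exact absurd hw (by simp)
  have hc1 : (1 : ℝ) ≤ (c : ℝ) := by exact_mod_cast hw
  have hw' : ∑ j ∈ s, w j / c = 1 := by
    rw [← Finset.sum_div, ← hc, div_self hc0]
  have hrw : ∀ j x, h j x ^ (w j : ℝ) = (h j x ^ ((w j / c : NNReal) : ℝ)) ^ (c : ℝ) := by
    intro j x
    rw [← NNReal.rpow_mul]
    congr 1
    rw [NNReal.coe_div]
    field_simp
  calc ∑ x : κ, ∏ j ∈ s, h j x ^ (w j : ℝ)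
      = ∑ x : κ, (∏ j ∈ s, h j x ^ ((w j / c : NNReal) : ℝ)) ^ (c : ℝ) := by
        refine Finset.sum_congr rfl fun x _ => ?_
        rw [← NNReal.finset_prod_rpow]
        exact Finset.prod_congr rfl fun j _ => hrw j x
    _ ≤ (∑ x : κ, ∏ j ∈ s, h j x ^ ((w j / c : NNReal) : ℝ)) ^ (c : ℝ) :=
        aux_sum_rpow_le _ hc1
    _ ≤ (∏ j ∈ s, (∑ x : κ, h j x) ^ ((w j / c : NNReal) : ℝ)) ^ (c : ℝ) :=
        NNReal.rpow_le_rpow (aux_holder_one s _ h hw') (by linarith)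
    _ = ∏ j ∈ s, (∑ x : κ, h j x) ^ (w j : ℝ) := by
        rw [← NNReal.finset_prod_rpow]
        refine Finset.prod_congr rfl fun j _ => ?_
        rw [← NNReal.rpow_mul]
        congr 1
        rw [NNReal.coe_div]
        field_simp

end Aux

section Finner

variable {d : ℕ} {K : Fin d → ℕ}

/-- The finset of functions agreeing with `f₀` outside `A`. -/
noncomputable def sect (K : Fin d → ℕ) (A : Finset (Fin d)) (f₀ : (i : Fin d) → Fin (K i)) :
    Finset ((i : Fin d) → Fin (K i)) :=
  Finset.univ.filter (fun f => ∀ i ∉ A, f i = f₀ i)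

lemma mem_sect {A : Finset (Fin d)} {f₀ f : (i : Fin d) → Fin (K i)} :
    f ∈ sect K A f₀ ↔ ∀ i ∉ A, f i = f₀ i := by
  simp [sect]

lemma sect_empty (f₀ : (i : Fin d) → Fin (K i)) : sect K ∅ f₀ = {f₀} := by
  ext f
  rw [mem_sect, Finset.mem_singleton]
  constructor
  · intro h; funext i; exact h i (Finset.notMem_empty i)
  · rintro rfl i _; rfl

lemma sect_insert_eq_biUnion {A : Finset (Fin d)} {i : Fin d} (hi : i ∉ A)
    (f₀ : (i : Fin d) → Fin (K i)) :
    sect K (insert i A) f₀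
      = Finset.univ.biUnion (fun x : Fin (K i) => sect K A (update f₀ i x)) := by
  ext f
  simp only [Finset.mem_biUnion, Finset.mem_univ, true_and, mem_sect]
  constructor
  · intro h
    refine ⟨f i, fun j hj => ?_⟩
    by_cases hji : j = i
    · subst hji; simp
    · rw [update_of_ne hji]
      exact h j (by simp [hji, hj])
  · rintro ⟨x, hx⟩ j hj
    have hjA : j ∉ A := fun h => hj (Finset.mem_insert_of_mem h)
    have hji : j ≠ i := fun h => hj (h ▸ Finset.mem_insert_self i A)
    have := hx j hjA
    rwa [update_of_ne hji] at this

lemma sect_insert_sum {A : Finset (Fin d)} {i : Fin d} (hi : i ∉ A)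
    (f₀ : (i : Fin d) → Fin (K i)) (T : ((i : Fin d) → Fin (K i)) → NNReal) :
    ∑ f ∈ sect K (insert i A) f₀, T f
      = ∑ x : Fin (K i), ∑ f ∈ sect K A (update f₀ i x), T f := by
  rw [sect_insert_eq_biUnion hi, Finset.sum_biUnion]
  intro x _ y _ hxy
  refine Finset.disjoint_left.2 fun f hfx hfy => hxy ?_
  have h1 := (mem_sect.1 hfx) i hi
  have h2 := (mem_sect.1 hfy) i hi
  rw [update_self] at h1 h2
  rw [← h1, ← h2]

lemma sect_update_sum_eq {B : Finset (Fin d)} {i : Fin d} (hiB : i ∉ B)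
    (f₀ : (i : Fin d) → Fin (K i)) (x : Fin (K i))
    (T : ((i : Fin d) → Fin (K i)) → NNReal)
    (hT : ∀ f : (i : Fin d) → Fin (K i), T (update f i (f₀ i)) = T f) :
    ∑ f ∈ sect K B (update f₀ i x), T f = ∑ f ∈ sect K B f₀, T f := by
  refine Finset.sum_nbij' (fun f => update f i (f₀ i)) (fun f => update f i x) ?_ ?_ ?_ ?_ ?_
  · intro f hf
    rw [mem_sect] at hf ⊢
    intro j hj
    by_cases hji : j = i
    · subst hji; simp
    · rw [update_of_ne hji]
      have := hf j hj
      rwa [update_of_ne hji] at this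
  · intro f hf
    rw [mem_sect] at hf ⊢
    intro j hj
    by_cases hji : j = i
    · subst hji; simp
    · rw [update_of_ne hji, update_of_ne hji]
      exact hf j hj
  · intro f hf
    have hfi : f i = update f₀ i x i := (mem_sect.1 hf) i hiB
    rw [update_self] at hfi
    rw [update_idem, ← hfi, update_eq_self]
  · intro f hf
    have hfi : f i = f₀ i := (mem_sect.1 hf) i hiB
    rw [update_idem, ← hfi, update_eq_self]
  · intro f hf
    exact (hT f).symm

/-- Discrete Finner / generalized Hölder inequality (AGM bound form). -/
lemma finner (E : Finset (Finset (Fin d))) (v : Finset (Fin d) → NNReal)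
    (hcov : ∀ i : Fin d, 1 ≤ ∑ e ∈ E.filter (fun e => i ∈ e), v e)
    (g : Finset (Fin d) → ((i : Fin d) → Fin (K i)) → NNReal)
    (hdep : ∀ e ∈ E, ∀ f f' : (i : Fin d) → Fin (K i),
      (∀ i ∈ e, f i = f' i) → g e f = g e f')
    (A : Finset (Fin d)) (f₀ : (i : Fin d) → Fin (K i)) :
    ∑ f ∈ sect K A f₀, ∏ e ∈ E, g e f ^ (v e : ℝ)
      ≤ ∏ e ∈ E, (∑ f ∈ sect K (e ∩ A) f₀, g e f) ^ (v e : ℝ) := by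
  induction A using Finset.induction_on generalizing f₀ with
  | empty =>
      simp only [Finset.inter_empty, sect_empty, Finset.sum_singleton]
      exact le_rfl
  | @insert i A hi IH =>
      have step1 : ∑ f ∈ sect K (insert i A) f₀, ∏ e ∈ E, g e f ^ (v e : ℝ)
          ≤ ∑ x : Fin (K i),
              ∏ e ∈ E, (∑ f ∈ sect K (e ∩ A) (update f₀ i x), g e f) ^ (v e : ℝ) := by
        rw [sect_insert_sum hi]
        exact Finset.sum_le_sum fun x _ => IH (update f₀ i x)
      refine le_trans step1 ?_
      -- split the product over edges containing i and the rest
      have hsplit : ∀ x : Fin (K i),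
          ∏ e ∈ E, (∑ f ∈ sect K (e ∩ A) (update f₀ i x), g e f) ^ (v e : ℝ)
            = (∏ e ∈ E.filter (fun e => i ∈ e),
                  (∑ f ∈ sect K (e ∩ A) (update f₀ i x), g e f) ^ (v e : ℝ))
              * ∏ e ∈ E.filter (fun e => ¬ i ∈ e),
                  (∑ f ∈ sect K (e ∩ A) f₀, g e f) ^ (v e : ℝ) := by
        intro x
        rw [← Finset.prod_filter_mul_prod_filter_not E (fun e => i ∈ e)]
        congr 1
        refine Finset.prod_congr rfl fun e he => ?_
        obtain ⟨heE, hie⟩ := Finset.mem_filter.1 he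
        congr 1
        refine sect_update_sum_eq (fun h => hie (Finset.mem_of_mem_inter_left h)) f₀ x
          (g e) (fun f => hdep e heE _ _ fun j hj => ?_)
        exact update_of_ne (fun h : j = i => hie (by rw [← h]; exact hj)) _ _
      have hEi : ∀ e ∈ E.filter (fun e => i ∈ e), e ∩ insert i A = insert i (e ∩ A) := by
        intro e he
        obtain ⟨-, hie⟩ := Finset.mem_filter.1 he
        ext j
        simp only [Finset.mem_inter, Finset.mem_insert]
        constructor
        · rintro ⟨hje, hj⟩
          rcases hj with hj | hj
          · exact Or.inl hj
          · exact Or.inr ⟨hje, hj⟩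
        · rintro (hj | ⟨hje, hj⟩)
          · exact ⟨by rw [hj]; exact hie, Or.inl hj⟩
          · exact ⟨hje, Or.inr hj⟩
      have hEni : ∀ e ∈ E.filter (fun e => ¬ i ∈ e), e ∩ insert i A = e ∩ A := by
        intro e he
        obtain ⟨-, hie⟩ := Finset.mem_filter.1 he
        ext j
        simp only [Finset.mem_inter, Finset.mem_insert]
        constructor
        · rintro ⟨hje, hj⟩
          rcases hj with hj | hj
          · exact absurd (hj ▸ hje) hie
          · exact ⟨hje, hj⟩
        · rintro ⟨hje, hj⟩
          exact ⟨hje, Or.inr hj⟩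
      calc ∑ x : Fin (K i),
              ∏ e ∈ E, (∑ f ∈ sect K (e ∩ A) (update f₀ i x), g e f) ^ (v e : ℝ)
          = (∏ e ∈ E.filter (fun e => ¬ i ∈ e),
                (∑ f ∈ sect K (e ∩ A) f₀, g e f) ^ (v e : ℝ))
            * ∑ x : Fin (K i), ∏ e ∈ E.filter (fun e => i ∈ e),
                (∑ f ∈ sect K (e ∩ A) (update f₀ i x), g e f) ^ (v e : ℝ) := by
            rw [Finset.mul_sum]
            refine Finset.sum_congr rfl fun x _ => ?_
            rw [hsplit x, mul_comm]
        _ ≤ (∏ e ∈ E.filter (fun e => ¬ i ∈ e),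
                (∑ f ∈ sect K (e ∩ A) f₀, g e f) ^ (v e : ℝ))
            * ∏ e ∈ E.filter (fun e => i ∈ e),
                (∑ x : Fin (K i), ∑ f ∈ sect K (e ∩ A) (update f₀ i x), g e f) ^ (v e : ℝ) := by
            refine mul_le_mul_right ?_ _
            exact aux_holder _ v _ (hcov i)
        _ = ∏ e ∈ E, (∑ f ∈ sect K (e ∩ insert i A) f₀, g e f) ^ (v e : ℝ) := by
            rw [mul_comm, ← Finset.prod_filter_mul_prod_filter_not E (fun e => i ∈ e)]
            congr 1
            · refine Finset.prod_congr rfl fun e he => ?_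
              rw [hEi e he]
              congr 1
              have hiA : i ∉ e ∩ A := fun h => hi (Finset.mem_of_mem_inter_right h)
              rw [sect_insert_sum hiA f₀ (g e)]
            · refine Finset.prod_congr rfl fun e he => ?_
              rw [hEni e he]

end Finner

theorem heavy_combination_count_bound
    (d : ℕ) (hd : 0 < d)
    (E : Finset (Finset (Fin d))) (hE : E.Nonempty) (hEne : ∀ e ∈ E, e.Nonempty)
    (R : Finset (Fin d) → Finset (Fin d → ℤ))
    (W : Finset (Fin d) → ℝ) (hW : ∀ e ∈ E, 0 ≤ W e)
    (hcov : ∀ i : Fin d, 1 ≤ ∑ e ∈ E.filter (fun e => i ∈ e), W e)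
    (N : ℝ) (hN : 1 ≤ N) (hsize : ∀ e ∈ E, ((R e).card : ℝ) ≤ N)
    (K : Fin d → ℕ) (I : (i : Fin d) → Fin (K i) → Set ℤ)
    (hdisj : ∀ i : Fin d, ∀ a b : Fin (K i), a ≠ b → Disjoint (I i a) (I i b))
    (Δ : ℝ) (hΔ : 0 < Δ) :
    ((Finset.univ.filter (fun f : (i : Fin d) → Fin (K i) =>
        Δ < ∏ e ∈ E,
          pow0 (((R e).filter (fun t => ∀ i ∈ e, t i ∈ I i (f i))).card : ℝ) (W e))).card : ℝ)
      ≤ pow0 N (∑ e ∈ E, W e) / Δ := by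
  have hN0 : (0:ℝ) < N := lt_of_lt_of_le one_pos hN
  have hpowN : pow0 N (∑ e ∈ E, W e) = N ^ (∑ e ∈ E, W e) := by
    rw [pow0, if_neg (ne_of_gt hN0)]; rfl
  by_cases hne : Nonempty ((i : Fin d) → Fin (K i))
  swap
  · have : (Finset.univ : Finset ((i : Fin d) → Fin (K i))) = ∅ := by
      rw [Finset.univ_eq_empty_iff]; exact not_nonempty_iff.1 hne
    rw [Finset.filter_congr_decidable]
    rw [this, Finset.filter_empty, Finset.card_empty]
    rw [hpowN]
    simp only [Nat.cast_zero]
    have h1 := Real.rpow_nonneg hN0.le (∑ e ∈ E, W e)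
    positivity
  obtain ⟨f₀⟩ := hne
  set g : Finset (Fin d) → ((i : Fin d) → Fin (K i)) → NNReal := fun e f =>
    (((R e).filter (fun t => ∀ i ∈ e, t i ∈ I i (f i))).card : NNReal) with hg
  set v : Finset (Fin d) → NNReal := fun e => (W e).toNNReal with hv
  have hvW : ∀ e ∈ E, ((v e : NNReal) : ℝ) = W e := fun e he =>
    Real.coe_toNNReal _ (hW e he)
  have hcov' : ∀ i : Fin d, 1 ≤ ∑ e ∈ E.filter (fun e => i ∈ e), v e := by
    intro i
    rw [← NNReal.coe_le_coe, NNReal.coe_sum, NNReal.coe_one]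
    calc (1:ℝ) ≤ ∑ e ∈ E.filter (fun e => i ∈ e), W e := hcov i
      _ = ∑ e ∈ E.filter (fun e => i ∈ e), ((v e : NNReal) : ℝ) :=
        Finset.sum_congr rfl fun e he => (hvW e (Finset.mem_of_mem_filter e he)).symm
  have hdep : ∀ e ∈ E, ∀ f f' : (i : Fin d) → Fin (K i),
      (∀ i ∈ e, f i = f' i) → g e f = g e f' := by
    intro e _ f f' hff'
    simp only [hg]
    have : (R e).filter (fun t => ∀ i ∈ e, t i ∈ I i (f i))
        = (R e).filter (fun t => ∀ i ∈ e, t i ∈ I i (f' i)) := by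
      refine Finset.filter_congr fun t _ => ?_
      constructor
      · intro h i hi; rw [← hff' i hi]; exact h i hi
      · intro h i hi; rw [hff' i hi]; exact h i hi
    rw [this]
  have hsect : sect K Finset.univ f₀ = Finset.univ := by
    ext f; simp [mem_sect]
  have key := finner E v hcov' g hdep Finset.univ f₀
  rw [hsect] at key
  -- bound each marginal
  have hmarg : ∀ e ∈ E, (∑ f ∈ sect K e f₀, g e f) ≤ ((R e).card : NNReal) := by
    intro e heE
    have hNat : ∑ f ∈ sect K e f₀,
        ((R e).filter (fun t => ∀ i ∈ e, t i ∈ I i (f i))).card ≤ (R e).card := by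
      rw [← Finset.card_biUnion]
      · exact Finset.card_le_card (Finset.biUnion_subset.2 fun f _ =>
          Finset.filter_subset _ _)
      · intro f hf f' hf' hne'
        refine Finset.disjoint_left.2 fun t ht ht' => hne' ?_
        have ht1 := (Finset.mem_filter.1 ht).2
        have ht2 := (Finset.mem_filter.1 ht').2
        funext i
        by_cases hie : i ∈ e
        · by_contra hfi
          exact Set.disjoint_left.1 (hdisj i (f i) (f' i) hfi) (ht1 i hie) (ht2 i hie)
        · rw [(mem_sect.1 hf) i hie, (mem_sect.1 hf') i hie]
    simp only [hg]
    exact_mod_cast hNat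
  have key2 : ∑ f : (i : Fin d) → Fin (K i), ∏ e ∈ E, g e f ^ ((v e : NNReal) : ℝ)
      ≤ ∏ e ∈ E, ((R e).card : NNReal) ^ ((v e : NNReal) : ℝ) := by
    refine le_trans key (Finset.prod_le_prod' fun e he => ?_)
    exact NNReal.rpow_le_rpow (by rw [Finset.inter_univ] at *; exact hmarg e he)
      (v e).coe_nonneg
  have hptw : ∀ f : (i : Fin d) → Fin (K i),
      ∏ e ∈ E, pow0 (((R e).filter (fun t => ∀ i ∈ e, t i ∈ I i (f i))).card : ℝ) (W e)
        ≤ ((∏ e ∈ E, g e f ^ ((v e : NNReal) : ℝ) : NNReal) : ℝ) := by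
    intro f
    rw [NNReal.coe_prod]
    refine Finset.prod_le_prod (fun e _ => ?_) (fun e he => ?_)
    · rw [pow0]
      split_ifs
      · exact le_rfl
      · exact Real.rpow_nonneg (Nat.cast_nonneg _) _
    · rw [NNReal.coe_rpow]
      have hge : ((g e f : NNReal) : ℝ)
          = (((R e).filter (fun t => ∀ i ∈ e, t i ∈ I i (f i))).card : ℝ) := by
        simp [hg]
      rw [hge, hvW e he, pow0]
      split_ifs with h0
      · exact Real.rpow_nonneg (Nat.cast_nonneg _) _
      · exact le_rfl
  have htot : ((∑ f : (i : Fin d) → Fin (K i),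
        ∏ e ∈ E, g e f ^ ((v e : NNReal) : ℝ) : NNReal) : ℝ) ≤ N ^ (∑ e ∈ E, W e) := by
    calc ((∑ f : (i : Fin d) → Fin (K i),
          ∏ e ∈ E, g e f ^ ((v e : NNReal) : ℝ) : NNReal) : ℝ)
        ≤ ((∏ e ∈ E, ((R e).card : NNReal) ^ ((v e : NNReal) : ℝ) : NNReal) : ℝ) := by
          exact_mod_cast key2
      _ = ∏ e ∈ E, ((R e).card : ℝ) ^ (W e) := by
          rw [NNReal.coe_prod]
          refine Finset.prod_congr rfl fun e he => ?_
          rw [NNReal.coe_rpow, NNReal.coe_natCast, hvW e he]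
      _ ≤ ∏ e ∈ E, N ^ (W e) := by
          refine Finset.prod_le_prod (fun e _ => Real.rpow_nonneg (Nat.cast_nonneg _) _)
            (fun e he => Real.rpow_le_rpow (Nat.cast_nonneg _) (hsize e he) (hW e he))
      _ = N ^ (∑ e ∈ E, W e) := (Real.rpow_sum_of_pos hN0 W E).symm
  rw [hpowN, le_div_iff₀ hΔ]
  calc ((Finset.univ.filter (fun f : (i : Fin d) → Fin (K i) =>
        Δ < ∏ e ∈ E,
          pow0 (((R e).filter (fun t => ∀ i ∈ e, t i ∈ I i (f i))).card : ℝ) (W e))).card : ℝ) * Δ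
      = ∑ _f ∈ Finset.univ.filter (fun f : (i : Fin d) → Fin (K i) =>
        Δ < ∏ e ∈ E,
          pow0 (((R e).filter (fun t => ∀ i ∈ e, t i ∈ I i (f i))).card : ℝ) (W e)), Δ := by
        rw [Finset.sum_const, nsmul_eq_mul]
    _ ≤ ∑ f ∈ Finset.univ.filter (fun f : (i : Fin d) → Fin (K i) =>
        Δ < ∏ e ∈ E,
          pow0 (((R e).filter (fun t => ∀ i ∈ e, t i ∈ I i (f i))).card : ℝ) (W e)),
          ((∏ e ∈ E, g e f ^ ((v e : NNReal) : ℝ) : NNReal) : ℝ) := by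
        refine Finset.sum_le_sum fun f hf => ?_
        exact le_trans (le_of_lt (Finset.mem_filter.1 hf).2) (hptw f)
    _ ≤ ∑ f : (i : Fin d) → Fin (K i),
          ((∏ e ∈ E, g e f ^ ((v e : NNReal) : ℝ) : NNReal) : ℝ) :=
        Finset.sum_le_sum_of_subset_of_nonneg (Finset.filter_subset _ _)
          (fun f _ _ => NNReal.coe_nonneg _)
    _ = ((∑ f : (i : Fin d) → Fin (K i),
          ∏ e ∈ E, g e f ^ ((v e : NNReal) : ℝ) : NNReal) : ℝ) := (NNReal.coe_sum _ _).symm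
    _ ≤ N ^ (∑ e ∈ E, W e) := htot
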